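/- arXiv:1310.5192 — 2 statements merged into one kernel-verified Lean document; each statement's English description precedes it below -/
import Mathlib

section
/- Let a₁ > 0 and a₂ > 0, let η ⊆ ℤ^d be a configuration with η ⊆ Φ(η), let x₀ ∈ ℤ^d, and let η' be the configuration obtained from η by a single best-response update at x₀, i.e. η' agrees with η at every site other than x₀ and x₀ ∈ η' if and only if x₀ ∈ Φ(η). Then η ⊆ η' ⊆ Φ(η), Φ(η) ⊆ Φ(η'), and η' ⊆ Φ(η'). -/
/-- Two sites of `ℤᵈ` are neighbors iff their `ℓ¹`-distance equals `1`. -/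
def Neighbor (d : ℕ) (x y : Fin d → ℤ) : Prop :=
  (∑ i, (x i - y i).natAbs) = 1

/-- Number of neighbors of `x` following strategy 1 (i.e. belonging to `η`). -/
noncomputable def N1 (d : ℕ) (η : Set (Fin d → ℤ)) (x : Fin d → ℤ) : ℕ :=
  Set.ncard {y | Neighbor d x y ∧ y ∈ η}

/-- Number of neighbors of `x` following strategy 2 (i.e. not belonging to `η`). -/
noncomputable def N2 (d : ℕ) (η : Set (Fin d → ℤ)) (x : Fin d → ℤ) : ℕ :=
  Set.ncard {y | Neighbor d x y ∧ y ∉ η}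

/-- The best-response map on configurations. -/
def Phi (d : ℕ) (a₁ a₂ : ℝ) (η : Set (Fin d → ℤ)) : Set (Fin d → ℤ) :=
  {x | a₁ * (N1 d η x : ℝ) > a₂ * (N2 d η x : ℝ) ∨
    (x ∈ η ∧ a₁ * (N1 d η x : ℝ) = a₂ * (N2 d η x : ℝ))}

/-- The hypercube `H_z = 2z + {0,1}^d`. -/
def Hcube (d : ℕ) (z : Fin d → ℤ) : Set (Fin d → ℤ) :=
  {x | ∀ i, x i = 2 * z i ∨ x i = 2 * z i + 1}

/-- A configuration is a union of hypercubes if it is `⋃_{z ∈ S} H_z` for some `S ⊆ ℤᵈ`. -/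
def IsUnionOfHypercubes (d : ℕ) (η : Set (Fin d → ℤ)) : Prop :=
  ∃ S : Set (Fin d → ℤ), η = ⋃ z ∈ S, Hcube d z

lemma neighbor_finite (d : ℕ) (x : Fin d → ℤ) : {y : Fin d → ℤ | Neighbor d x y}.Finite := by
  have : {y : Fin d → ℤ | Neighbor d x y} ⊆ Set.pi Set.univ (fun i => Set.Icc (x i - 1) (x i + 1)) := by
    intro y hy i _
    have h1 : (x i - y i).natAbs ≤ ∑ j, (x j - y j).natAbs :=
      Finset.single_le_sum (f := fun j => (x j - y j).natAbs) (fun j _ => Nat.zero_le _)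
        (Finset.mem_univ i)
    have h2 : (x i - y i).natAbs ≤ 1 := by rw [hy] at h1; exact h1
    have h3 : |x i - y i| ≤ 1 := by
      rw [Int.abs_eq_natAbs]; exact_mod_cast h2
    rw [abs_le] at h3
    constructor <;> omega
  exact Set.Finite.subset (Set.Finite.pi (fun i => Set.finite_Icc _ _)) this

lemma N1_mono (d : ℕ) (η η' : Set (Fin d → ℤ)) (h : η ⊆ η') (x : Fin d → ℤ) :
    N1 d η x ≤ N1 d η' x := by
  apply Set.ncard_le_ncard
  · intro y hy; exact ⟨hy.1, h hy.2⟩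
  · exact (neighbor_finite d x).subset (fun y hy => hy.1)

lemma N2_mono (d : ℕ) (η η' : Set (Fin d → ℤ)) (h : η ⊆ η') (x : Fin d → ℤ) :
    N2 d η' x ≤ N2 d η x := by
  apply Set.ncard_le_ncard
  · intro y hy; exact ⟨hy.1, fun hm => hy.2 (h hm)⟩
  · exact (neighbor_finite d x).subset (fun y hy => hy.1)

lemma Phi_mono (d : ℕ) (a₁ a₂ : ℝ) (ha₁ : 0 < a₁) (ha₂ : 0 < a₂)
    (η η' : Set (Fin d → ℤ)) (h : η ⊆ η') :
    Phi d a₁ a₂ η ⊆ Phi d a₁ a₂ η' := by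
  intro x hx
  have h1 : a₁ * (N1 d η x : ℝ) ≤ a₁ * (N1 d η' x : ℝ) := by
    apply mul_le_mul_of_nonneg_left _ ha₁.le
    exact_mod_cast N1_mono d η η' h x
  have h2 : a₂ * (N2 d η' x : ℝ) ≤ a₂ * (N2 d η x : ℝ) := by
    apply mul_le_mul_of_nonneg_left _ ha₂.le
    exact_mod_cast N2_mono d η η' h x
  rcases hx with hlt | ⟨hm, heq⟩
  · exact Or.inl (lt_of_le_of_lt h2 (lt_of_lt_of_le hlt h1))
  · rcases lt_or_ge (a₂ * (N2 d η' x : ℝ)) (a₁ * (N1 d η' x : ℝ)) with hlt | hle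
    · exact Or.inl hlt
    · exact Or.inr ⟨h hm, le_antisymm hle (by linarith)⟩

/-- A single best-response update at a site `x₀`, applied to a configuration `η` with
`η ⊆ Φ(η)`, produces a configuration `η'` with `η ⊆ η' ⊆ Φ(η)`, `Φ(η) ⊆ Φ(η')` and
`η' ⊆ Φ(η')`. -/
theorem single_update_monotone (d : ℕ) (hd : 1 ≤ d) (a₁ a₂ : ℝ)
    (ha₁ : 0 < a₁) (ha₂ : 0 < a₂)
    (η η' : Set (Fin d → ℤ)) (hη : η ⊆ Phi d a₁ a₂ η) (x₀ : Fin d → ℤ)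
    (hoff : ∀ y : Fin d → ℤ, y ≠ x₀ → (y ∈ η' ↔ y ∈ η))
    (hat : x₀ ∈ η' ↔ x₀ ∈ Phi d a₁ a₂ η) :
    η ⊆ η' ∧ η' ⊆ Phi d a₁ a₂ η ∧ Phi d a₁ a₂ η ⊆ Phi d a₁ a₂ η' ∧
      η' ⊆ Phi d a₁ a₂ η' := by
  have hsub : η ⊆ η' := by
    intro y hy
    by_cases hyx : y = x₀
    · subst hyx; exact hat.mpr (hη hy)
    · exact (hoff y hyx).mpr hy
  have hsub2 : η' ⊆ Phi d a₁ a₂ η := by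
    intro y hy
    by_cases hyx : y = x₀
    · subst hyx; exact hat.mp hy
    · exact hη ((hoff y hyx).mp hy)
  have hphi := Phi_mono d a₁ a₂ ha₁ ha₂ η η' hsub
  exact ⟨hsub, hsub2, hphi, fun y hy => hphi (hsub2 hy)⟩
end

section
/- Let a₁ > a₂ > 0, let η ⊆ ℤ^d be a union of hypercubes, let z ∈ ℤ^d, and suppose H_{z − e_j} ⊆ η for j = 1, 2, …, d, where e_j denotes the j-th standard basis vector of ℤ^d. Then the full hypercube H_z is contained in Φ^{d+1}(η), the (d+1)-st iterate of the best-response map applied to η. (This is the deterministic step by which d fully occupied adjacent hypercubes force the occupation of H_z, used to dominate bootstrap percolation with parameter d.) -/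
lemma neighbor_update (d : ℕ) (x : Fin d → ℤ) (i : Fin d) (ε : ℤ)
    (hε : ε = 1 ∨ ε = -1) : Neighbor d x (Function.update x i (x i + ε)) := by
  unfold Neighbor
  rw [Finset.sum_eq_single i]
  · rcases hε with rfl | rfl <;> simp
  · intro j _ hj; simp [Function.update_of_ne hj]
  · simp

lemma neighbor_exists {d : ℕ} {x y : Fin d → ℤ} (h : Neighbor d x y) :
    ∃ i : Fin d, ∃ ε : ℤ, (ε = 1 ∨ ε = -1) ∧ y = Function.update x i (x i + ε) := by
  unfold Neighbor at h
  have hne : ∃ i ∈ Finset.univ, (x i - y i).natAbs ≠ 0 := by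
    by_contra hc
    push_neg at hc
    rw [Finset.sum_eq_zero (fun i hi => hc i hi)] at h
    omega
  obtain ⟨i, _, hi⟩ := hne
  have hle : (x i - y i).natAbs ≤ 1 := by
    have h2 := Finset.single_le_sum (f := fun j => (x j - y j).natAbs)
      (fun j _ => Nat.zero_le _) (Finset.mem_univ i)
    omega
  have hi1 : (x i - y i).natAbs = 1 := by omega
  have hrest : ∀ j, j ≠ i → (x j - y j).natAbs = 0 := by
    intro j hj
    have hsum := Finset.sum_erase_add Finset.univ (fun j => (x j - y j).natAbs) (Finset.mem_univ i)
    have h0 : ∑ k ∈ Finset.univ.erase i, (x k - y k).natAbs = 0 := by omega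
    have := Finset.sum_eq_zero_iff.mp h0 j (Finset.mem_erase.mpr ⟨hj, Finset.mem_univ j⟩)
    exact this
  refine ⟨i, y i - x i, by omega, ?_⟩
  funext j
  by_cases hj : j = i
  · subst hj; simp
  · have := hrest j hj
    rw [Function.update_of_ne hj]
    omega

lemma neighbor_set_finite (d : ℕ) (x : Fin d → ℤ) : {y | Neighbor d x y}.Finite := by
  apply Set.Finite.subset (Set.finite_range
    (fun p : Fin d × Bool => Function.update x p.1 (x p.1 + if p.2 then 1 else -1)))
  rintro y hy
  obtain ⟨i, ε, hε, rfl⟩ := neighbor_exists hy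
  rcases hε with rfl | rfl
  · exact ⟨(i, true), rfl⟩
  · exact ⟨(i, false), rfl⟩

lemma neighbor_set_ncard (d : ℕ) (x : Fin d → ℤ) :
    {y | Neighbor d x y}.ncard ≤ 2 * d := by
  have hsub : {y | Neighbor d x y} ⊆ Set.range
      (fun p : Fin d × Bool => Function.update x p.1 (x p.1 + if p.2 then 1 else -1)) := by
    rintro y hy
    obtain ⟨i, ε, hε, rfl⟩ := neighbor_exists hy
    rcases hε with rfl | rfl
    · exact ⟨(i, true), rfl⟩
    · exact ⟨(i, false), rfl⟩
  calc {y | Neighbor d x y}.ncard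
      ≤ (Set.range (fun p : Fin d × Bool =>
          Function.update x p.1 (x p.1 + if p.2 then 1 else -1))).ncard :=
        Set.ncard_le_ncard hsub (Set.finite_range _)
    _ ≤ (Set.univ : Set (Fin d × Bool)).ncard := by
        rw [← Set.image_univ]
        exact Set.ncard_image_le Set.finite_univ
    _ = 2 * d := by
        rw [Set.ncard_univ, Nat.card_eq_fintype_card]
        simp [Fintype.card_prod]
        ring

/-- Key lemma: if `x` has a neighbor in `ξ` in each of the `d` coordinate directions,
then `x ∈ Phi d a₁ a₂ ξ`. -/
lemma mem_phi_of_neighbors {d : ℕ} (hd : 1 ≤ d) {a₁ a₂ : ℝ} (ha : a₁ > a₂) (ha₂ : 0 < a₂)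
    (ξ : Set (Fin d → ℤ)) (x : Fin d → ℤ) (ε : Fin d → ℤ)
    (hε : ∀ i, ε i = 1 ∨ ε i = -1)
    (hmem : ∀ i, Function.update x i (x i + ε i) ∈ ξ) :
    x ∈ Phi d a₁ a₂ ξ := by
  set S1 := {y | Neighbor d x y ∧ y ∈ ξ} with hS1
  set S2 := {y | Neighbor d x y ∧ y ∉ ξ} with hS2
  have hfin : {y | Neighbor d x y}.Finite := neighbor_set_finite d x
  have hfin1 : S1.Finite := hfin.subset (fun y hy => hy.1)
  have hfin2 : S2.Finite := hfin.subset (fun y hy => hy.1)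
  have hN1 : d ≤ S1.ncard := by
    have hmaps : ∀ i ∈ (Set.univ : Set (Fin d)),
        (fun i => Function.update x i (x i + ε i)) i ∈ S1 := by
      intro i _
      exact ⟨neighbor_update d x i (ε i) (hε i), hmem i⟩
    have hinj : Set.InjOn (fun i => Function.update x i (x i + ε i))
        (Set.univ : Set (Fin d)) := by
      intro i _ j _ hij
      by_contra hne
      have h1 : Function.update x i (x i + ε i) j = Function.update x j (x j + ε j) j :=
        congrFun hij j
      rw [Function.update_of_ne (Ne.symm hne), Function.update_self] at h1
      rcases hε j with h | h <;> omega
    have key := Set.ncard_le_ncard_of_injOn _ hmaps hinj hfin1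
    rwa [Set.ncard_univ, Nat.card_eq_fintype_card, Fintype.card_fin] at key
  have hsum : S1.ncard + S2.ncard ≤ 2 * d := by
    have hdisj : Disjoint S1 S2 := by
      rw [Set.disjoint_left]
      rintro y ⟨_, hy1⟩ ⟨_, hy2⟩
      exact hy2 hy1
    have hunion : S1 ∪ S2 = {y | Neighbor d x y} := by
      ext y
      simp only [hS1, hS2, Set.mem_union, Set.mem_setOf_eq]
      tauto
    have := Set.ncard_union_eq hdisj hfin1 hfin2
    rw [hunion] at this
    rw [← this]
    exact neighbor_set_ncard d x
  have hN2 : S2.ncard ≤ d := by omega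
  left
  show a₁ * (N1 d ξ x : ℝ) > a₂ * (N2 d ξ x : ℝ)
  have e1 : N1 d ξ x = S1.ncard := rfl
  have e2 : N2 d ξ x = S2.ncard := rfl
  rw [e1, e2]
  have c1 : (d : ℝ) ≤ (S1.ncard : ℝ) := by exact_mod_cast hN1
  have c2 : (S2.ncard : ℝ) ≤ (d : ℝ) := by exact_mod_cast hN2
  have cd : (1 : ℝ) ≤ (d : ℝ) := by exact_mod_cast hd
  nlinarith

lemma sub_single_apply_same {d : ℕ} (z : Fin d → ℤ) (i : Fin d) :
    (z - Pi.single i 1 : Fin d → ℤ) i = z i - 1 := by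
  simp

lemma sub_single_apply_ne {d : ℕ} (z : Fin d → ℤ) {i j : Fin d} (h : j ≠ i) :
    (z - Pi.single i 1 : Fin d → ℤ) j = z j := by
  simp [Pi.single_eq_of_ne h]

lemma update_mem_hcube {d : ℕ} {z : Fin d → ℤ} {x : Fin d → ℤ} (hx : x ∈ Hcube d z)
    (i : Fin d) (v : ℤ) (hv : v = 2 * z i ∨ v = 2 * z i + 1) :
    Function.update x i v ∈ Hcube d z := by
  intro j
  by_cases hj : j = i
  · subst hj; simpa using hv
  · rw [Function.update_of_ne hj]; exact hx j

lemma filling_step (d : ℕ) (hd : 1 ≤ d) (a₁ a₂ : ℝ)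
    (ha : a₁ > a₂) (ha₂ : 0 < a₂)
    (η : Set (Fin d → ℤ)) (hη : IsUnionOfHypercubes d η) (z : Fin d → ℤ)
    (hadj : ∀ j : Fin d, Hcube d (z - Pi.single j 1) ⊆ η) :
    ∀ k : ℕ, ∀ x : Fin d → ℤ,
      (x ∈ η ∨ (x ∈ Hcube d z ∧ {i | x i = 2 * z i + 1}.ncard < k)) →
      x ∈ (Phi d a₁ a₂)^[k] η := by
  obtain ⟨S, hS⟩ := hη
  intro k
  induction k with
  | zero =>
    rintro x (hx | ⟨_, hlt⟩)
    · exact hx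
    · omega
  | succ k ih =>
    rintro x hx
    rw [Function.iterate_succ_apply']
    rcases hx with hx | ⟨hxz, hlt⟩
    · -- x lies in a full hypercube H_w ⊆ η
      rw [hS] at hx
      simp only [Set.mem_iUnion] at hx
      obtain ⟨w, hw, hxw⟩ := hx
      set ε : Fin d → ℤ := fun i => if x i = 2 * w i then 1 else -1 with hεdef
      apply mem_phi_of_neighbors hd ha ha₂ _ x ε
      · intro i; by_cases h : x i = 2 * w i <;> simp [hεdef, h]
      · intro i
        have hmem : Function.update x i (x i + ε i) ∈ Hcube d w := by
          apply update_mem_hcube hxw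
          rcases hxw i with h | h
          · right; simp [hεdef, h]
          · left
            have hne : x i ≠ 2 * w i := by omega
            simp [hεdef, hne]; omega
        have : Function.update x i (x i + ε i) ∈ η := by
          rw [hS]; exact Set.mem_biUnion hw hmem
        exact ih _ (Or.inl this)
    · -- x ∈ Hcube d z with few "+1" coordinates; all lower neighbors work
      apply mem_phi_of_neighbors hd ha ha₂ _ x (fun _ => -1)
      · intro i; right; rfl
      · intro i
        rcases hxz i with h | h
        · -- x i = 2 z i : lower neighbor is in H_{z - e_i} ⊆ η
          have hmem : Function.update x i (x i + -1) ∈ Hcube d (z - Pi.single i 1) := by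
            intro j
            by_cases hj : j = i
            · subst hj
              right
              rw [Function.update_self, sub_single_apply_same]
              omega
            · rw [Function.update_of_ne hj, sub_single_apply_ne z hj]
              exact hxz j
          exact ih _ (Or.inl (hadj i hmem))
        · -- x i = 2 z i + 1 : lower neighbor is in H_z with one fewer "+1" coordinate
          set x' := Function.update x i (x i + -1) with hx'
          have hx'z : x' ∈ Hcube d z := by
            apply update_mem_hcube hxz; left; omega
          have hset : {j | x' j = 2 * z j + 1} = {j | x j = 2 * z j + 1} \ {i} := by
            ext j
            by_cases hj : j = i
            · subst hj
              simp [hx', Function.update_self]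
              omega
            · simp [hx', Function.update_of_ne hj, hj]
          have hfinA : {j | x j = 2 * z j + 1}.Finite := Set.toFinite _
          have hiA : i ∈ {j | x j = 2 * z j + 1} := h
          have hcard : {j | x' j = 2 * z j + 1}.ncard < {j | x j = 2 * z j + 1}.ncard := by
            rw [hset]
            exact Set.ncard_diff_singleton_lt_of_mem hiA hfinA
          exact ih _ (Or.inr ⟨hx'z, by omega⟩)

/-- If `a₁ > a₂ > 0`, `η` is a union of hypercubes, and the `d` hypercubes `H_{z - e_j}`
(`j = 1, …, d`) are contained in `η`, then the whole hypercube `H_z` is contained in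
`Φ^{d+1}(η)` (the step dominating bootstrap percolation with parameter `d`). -/
theorem hypercube_filled (d : ℕ) (hd : 1 ≤ d) (a₁ a₂ : ℝ)
    (ha : a₁ > a₂) (ha₂ : 0 < a₂)
    (η : Set (Fin d → ℤ)) (hη : IsUnionOfHypercubes d η) (z : Fin d → ℤ)
    (hadj : ∀ j : Fin d, Hcube d (z - Pi.single j 1) ⊆ η) :
    Hcube d z ⊆ (Phi d a₁ a₂)^[d + 1] η := by
  intro x hx
  apply filling_step d hd a₁ a₂ ha ha₂ η hη z hadj (d + 1) x
  right
  refine ⟨hx, ?_⟩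
  have : {i | x i = 2 * z i + 1}.ncard ≤ d := by
    calc {i | x i = 2 * z i + 1}.ncard ≤ (Set.univ : Set (Fin d)).ncard :=
      Set.ncard_le_ncard (Set.subset_univ _) Set.finite_univ
    _ = d := by simp [Set.ncard_univ]
  omega
end
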